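/- Let f be a coloring satisfying the bmf boundary conditions and let F : [0,1]^3 → [0,1]^3 implement f. If F(x) = x, then for every color c ∈ {0,1,2,3} there is a cubelet K_{ijk} with f(i,j,k) = c whose center lies within L∞ distance 2^{-n} of x. -/
import Mathlib


/-- α = 2^{-2n} -/
noncomputable def alphaOf (n : ℕ) : ℝ := 2 ^ (-(2 * n : ℤ))

/-- The displacement vectors δ_0 = (−α,−α,−α), δ_1 = (α,0,0), δ_2 = (0,α,0), δ_3 = (0,0,α). -/
noncomputable def deltaOf (n : ℕ) (c : Fin 4) : Fin 3 → ℝ :=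
  if c = 0 then (fun _ => -alphaOf n)
  else if c = 1 then (fun m => if m = 0 then alphaOf n else 0)
  else if c = 2 then (fun m => if m = 1 then alphaOf n else 0)
  else (fun m => if m = 2 then alphaOf n else 0)

/-- Center of the cubelet K_{ijk}: the point 2^{-n}(i + 1/2, j + 1/2, k + 1/2). -/
noncomputable def cubeletCenter (n : ℕ) (i j k : Fin (2 ^ n)) : Fin 3 → ℝ :=
  fun m => (2 : ℝ) ^ (-(n : ℤ)) * (((![(i : ℕ), (j : ℕ), (k : ℕ)] m : ℕ) : ℝ) + 1 / 2)

/-- A cubelet K_{ijk} is exterior if some index equals 0 or 2^n − 1. -/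
def ExteriorCubelet (n : ℕ) (i j k : Fin (2 ^ n)) : Prop :=
  i.val = 0 ∨ j.val = 0 ∨ k.val = 0 ∨
    i.val = 2 ^ n - 1 ∨ j.val = 2 ^ n - 1 ∨ k.val = 2 ^ n - 1

/-- The bmf boundary conditions on a coloring f. -/
def BMFBoundary (n : ℕ) (f : Fin (2 ^ n) → Fin (2 ^ n) → Fin (2 ^ n) → Fin 4) : Prop :=
  ∀ i j k : Fin (2 ^ n),
    (i.val = 0 → f i j k = 1) ∧
    (j.val = 0 → 0 < i.val → f i j k = 2) ∧
    (k.val = 0 → 0 < i.val → 0 < j.val → f i j k = 3) ∧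
    (ExteriorCubelet n i j k → 0 < i.val → 0 < j.val → 0 < k.val → f i j k = 0)

/-- A continuous map F : [0,1]³ → [0,1]³ implements the coloring f :
(a) at each cubelet center, F(x) = x + δ_{f(i,j,k)};
(b) everywhere, F(x) − x lies in the convex hull of the δ-vectors of the cubelets
whose centers lie within L∞ distance 2^{-n} of x. -/
def Implements (n : ℕ) (f : Fin (2 ^ n) → Fin (2 ^ n) → Fin (2 ^ n) → Fin 4)
    (F : (Fin 3 → ℝ) → Fin 3 → ℝ) : Prop :=
  ContinuousOn F (Set.Icc 0 1) ∧
  Set.MapsTo F (Set.Icc 0 1) (Set.Icc 0 1) ∧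
  (∀ i j k : Fin (2 ^ n),
    F (cubeletCenter n i j k) = cubeletCenter n i j k + deltaOf n (f i j k)) ∧
  (∀ x ∈ Set.Icc (0 : Fin 3 → ℝ) 1,
    F x - x ∈ convexHull ℝ
      {v : Fin 3 → ℝ | ∃ i j k : Fin (2 ^ n),
        dist x (cubeletCenter n i j k) ≤ (2 : ℝ) ^ (-(n : ℤ)) ∧ v = deltaOf n (f i j k)})


noncomputable def wOf (c : Fin 4) : Fin 3 → ℝ :=
  if c = 0 then fun _ => 1
  else if c = 1 then ![-3, 1, 1]
  else if c = 2 then ![1, -3, 1]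
  else ![1, 1, -3]

lemma alphaOf_pos (n : ℕ) : 0 < alphaOf n := zpow_pos (by norm_num) _

lemma w_delta (n : ℕ) (c c' : Fin 4) (h : c' ≠ c) :
    ∑ m, wOf c m * deltaOf n c' m = alphaOf n := by
  fin_cases c <;> fin_cases c' <;>
    simp_all [wOf, deltaOf, Fin.sum_univ_three] <;> ring

/-- at a fixpoint of an implementation of f, every one of the four colors
appears on some cubelet whose center is within L∞ distance 2^{-n} of the fixpoint. -/
theorem all_colors_near_fixpoint (n : ℕ) (hn : 1 ≤ n)
    (f : Fin (2 ^ n) → Fin (2 ^ n) → Fin (2 ^ n) → Fin 4)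
    (hf : BMFBoundary n f)
    (F : (Fin 3 → ℝ) → Fin 3 → ℝ) (hF : Implements n f F)
    (x : Fin 3 → ℝ) (hx : x ∈ Set.Icc (0 : Fin 3 → ℝ) 1) (hfix : F x = x) :
    ∀ c : Fin 4, ∃ i j k : Fin (2 ^ n),
      f i j k = c ∧ dist x (cubeletCenter n i j k) ≤ (2 : ℝ) ^ (-(n : ℤ)) :=
by
  intro c
  by_contra h
  push_neg at h
  have hmem := hF.2.2.2 x hx
  rw [hfix, sub_self] at hmem
  have hlin : IsLinearMap ℝ (fun v : Fin 3 → ℝ => ∑ m, wOf c m * v m) := by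
    constructor
    · intro a b; simp [mul_add, Finset.sum_add_distrib]
    · intro r a
      simp only [Pi.smul_apply, smul_eq_mul, Finset.mul_sum]
      exact Finset.sum_congr rfl fun m _ => by ring
  have hsub : {v : Fin 3 → ℝ | ∃ i j k : Fin (2 ^ n),
      dist x (cubeletCenter n i j k) ≤ (2 : ℝ) ^ (-(n : ℤ)) ∧ v = deltaOf n (f i j k)} ⊆
      {v : Fin 3 → ℝ | alphaOf n ≤ ∑ m, wOf c m * v m} := by
    rintro v ⟨i, j, k, hd, rfl⟩
    have hne : f i j k ≠ c := fun he => absurd hd (not_le.2 (h i j k he))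
    exact (w_delta n c (f i j k) hne).ge
  have h0 := convexHull_min hsub (convex_halfSpace_ge hlin (alphaOf n)) hmem
  simp only [Set.mem_setOf_eq, Pi.zero_apply, mul_zero, Finset.sum_const_zero] at h0
  exact absurd h0 (not_le.2 (alphaOf_pos n))
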